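/- There exists a constant c > 0 such that for all a ∈ ℝ^q and b ∈ ℝ, E|⟨a, W⟩ + b| ≥ c (‖a‖ + |b|); explicitly, one may take c = (1/2)·min(η/2, 1) when μ = 0, and c = (1/2)·min(1/2, η/(4‖μ‖))·min(1, 2‖μ‖) when μ ≠ 0. -/

import Mathlib

open MeasureTheory
open scoped RealInnerProductSpace

lemma key_ineqs {q : ℕ} {Ω : Type*} [MeasurableSpace Ω] {P : Measure Ω} [IsProbabilityMeasure P]
    (W : Ω → EuclideanSpace ℝ (Fin q)) (hWint : Integrable W P)
    (μ : EuclideanSpace ℝ (Fin q)) (hμ : μ = ∫ ω, W ω ∂P)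
    (η : ℝ)
    (hsep : ∀ u : EuclideanSpace ℝ (Fin q), ‖u‖ = 1 → η ≤ ∫ ω, |⟪u, W ω - μ⟫| ∂P)
    (a : EuclideanSpace ℝ (Fin q)) (b : ℝ) :
    |⟪a, μ⟫ + b| ≤ ∫ ω, |⟪a, W ω⟫ + b| ∂P ∧
    η * ‖a‖ ≤ 2 * ∫ ω, |⟪a, W ω⟫ + b| ∂P := by
  have hInt1 : Integrable (fun ω => ⟪a, W ω⟫ + b) P :=
    (hWint.const_inner a).add (integrable_const b)
  have hIntAbs : Integrable (fun ω => |⟪a, W ω⟫ + b|) P := hInt1.abs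
  have hmean : ∫ ω, (⟪a, W ω⟫ + b) ∂P = ⟪a, μ⟫ + b := by
    rw [integral_add (hWint.const_inner a) (integrable_const b), integral_const,
      probReal_univ, one_smul, integral_inner hWint, ← hμ]
  have h1 : |⟪a, μ⟫ + b| ≤ ∫ ω, |⟪a, W ω⟫ + b| ∂P := by
    rw [← hmean]
    calc |∫ ω, (⟪a, W ω⟫ + b) ∂P| = ‖∫ ω, (⟪a, W ω⟫ + b) ∂P‖ := (Real.norm_eq_abs _).symm
    _ ≤ ∫ ω, ‖⟪a, W ω⟫ + b‖ ∂P := norm_integral_le_integral_norm _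
    _ = ∫ ω, |⟪a, W ω⟫ + b| ∂P := by simp [Real.norm_eq_abs]
  refine ⟨h1, ?_⟩
  rcases eq_or_ne a 0 with rfl | ha
  · simp only [norm_zero, mul_zero]
    positivity
  · have hna : 0 < ‖a‖ := norm_pos_iff.mpr ha
    have hu : ‖(‖a‖⁻¹ • a : EuclideanSpace ℝ (Fin q))‖ = 1 := norm_smul_inv_norm ha
    have hsep' := hsep _ hu
    have hpt : ∀ ω, |⟪(‖a‖⁻¹ • a : EuclideanSpace ℝ (Fin q)), W ω - μ⟫| =
        ‖a‖⁻¹ * |⟪a, W ω - μ⟫| := by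
      intro ω
      rw [real_inner_smul_left, abs_mul, abs_of_nonneg (by positivity)]
    have heq : ∫ ω, |⟪(‖a‖⁻¹ • a : EuclideanSpace ℝ (Fin q)), W ω - μ⟫| ∂P =
        ‖a‖⁻¹ * ∫ ω, |⟪a, W ω - μ⟫| ∂P := by
      simp_rw [hpt]; exact integral_const_mul _ _
    rw [heq] at hsep'
    have h3 : η * ‖a‖ ≤ ∫ ω, |⟪a, W ω - μ⟫| ∂P := by
      have h := mul_le_mul_of_nonneg_right hsep' hna.le
      rwa [mul_right_comm, inv_mul_cancel₀ hna.ne', one_mul] at h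
    have hIntSub : Integrable (fun ω => |⟪a, W ω - μ⟫|) P :=
      ((hWint.sub (integrable_const μ)).const_inner a).abs
    have h4 : ∫ ω, |⟪a, W ω - μ⟫| ∂P ≤
        (∫ ω, |⟪a, W ω⟫ + b| ∂P) + |⟪a, μ⟫ + b| := by
      have hmono : ∫ ω, |⟪a, W ω - μ⟫| ∂P ≤
          ∫ ω, (|⟪a, W ω⟫ + b| + |⟪a, μ⟫ + b|) ∂P := by
        refine integral_mono hIntSub (hIntAbs.add (integrable_const _)) (fun ω => ?_)
        have : ⟪a, W ω - μ⟫ = (⟪a, W ω⟫ + b) - (⟪a, μ⟫ + b) := by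
          rw [inner_sub_right]; ring
        rw [this]
        exact abs_sub _ _
      rwa [integral_add hIntAbs (integrable_const _), integral_const, probReal_univ,
        one_smul] at hmono
    linarith

lemma arith0 (η s B E : ℝ) (hη : 0 < η) (hs : 0 ≤ s) (hB : 0 ≤ B)
    (h1 : B ≤ E) (h2 : η * s ≤ 2 * E) :
    (1 / 2) * min (η / 2) 1 * (s + B) ≤ E := by
  have k1 : min (η / 2) 1 ≤ η / 2 := min_le_left _ _
  have k2 : min (η / 2) 1 ≤ 1 := min_le_right _ _
  have k0 : 0 ≤ min (η / 2) 1 := le_min (by linarith) zero_le_one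
  nlinarith [mul_le_mul_of_nonneg_right k1 hs, mul_le_mul_of_nonneg_right k2 hB]

lemma arith1 (η m s B t E : ℝ) (hη : 0 < η) (hm : 0 < m) (hs : 0 ≤ s) (hB : 0 ≤ B)
    (ht : 0 ≤ t) (h1 : t ≤ E) (h2 : η * s ≤ 2 * E) (h3 : B ≤ t + m * s) :
    (1 / 2) * min (1 / 2) (η / (4 * m)) * min 1 (2 * m) * (s + B) ≤ E := by
  have hE0 : 0 ≤ E := le_trans ht h1
  set r := η / (4 * m) with hrdef
  have hr : r * (4 * m) = η := div_mul_cancel₀ _ (by positivity)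
  have hr0 : 0 < r := by rw [hrdef]; positivity
  set K := min (1 / 2) r * min 1 (2 * m) with hK
  have hK0 : 0 ≤ K := by positivity
  have hKA : K ≤ η / 2 := by
    rw [← hr]
    rcases le_total ((1:ℝ) / 2) r with h | h <;>
      rcases le_total (1:ℝ) (2 * m) with h' | h' <;>
      rw [hK]
    · rw [min_eq_left h, min_eq_left h']; nlinarith
    · rw [min_eq_left h, min_eq_right h']; nlinarith
    · rw [min_eq_right h, min_eq_left h']; nlinarith
    · rw [min_eq_right h, min_eq_right h']; nlinarith
  have hKB : K * (η + 2 * m) ≤ η := by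
    rw [← hr]
    rcases le_total ((1:ℝ) / 2) r with h | h <;>
      rcases le_total (1:ℝ) (2 * m) with h' | h' <;>
      rw [hK]
    · rw [min_eq_left h, min_eq_left h']; nlinarith
    · rw [min_eq_left h, min_eq_right h']; nlinarith
    · rw [min_eq_right h, min_eq_left h']; nlinarith
    · rw [min_eq_right h, min_eq_right h']
      have key : 2 * r * m + m ≤ 1 := by nlinarith
      nlinarith [mul_le_mul_of_nonneg_left key (le_of_lt (mul_pos hr0 hm))]
  have hKs : K * s ≤ E := by
    have := mul_le_mul_of_nonneg_right hKA hs
    nlinarith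
  have hKB' : K * B ≤ E := by
    have hb : η * B ≤ (η + 2 * m) * E := by nlinarith
    have := mul_le_mul_of_nonneg_left hb hK0
    have := mul_le_mul_of_nonneg_right hKB hE0
    nlinarith
  nlinarith

/-- Let `W : Ω → ℝ^q` be integrable with mean `μ`, and suppose `E|⟨u, W − μ⟩| ≥ η > 0`
for every unit vector `u`.  Then there is `c > 0` with
`E|⟨a, W⟩ + b| ≥ c (‖a‖ + |b|)` for all `a, b`; explicitly, one may take
`c = (1/2)·min(η/2, 1)` when `μ = 0`, and
`c = (1/2)·min(1/2, η/(4‖μ‖))·min(1, 2‖μ‖)` when `μ ≠ 0`. -/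
theorem expectation_abs_inner_add_lower_bound_explicit
    (q : ℕ) (hq : 1 ≤ q) {Ω : Type*} [MeasurableSpace Ω]
    (P : Measure Ω) [IsProbabilityMeasure P]
    (W : Ω → EuclideanSpace ℝ (Fin q)) (hWmeas : Measurable W)
    (hWint : Integrable W P)
    (μ : EuclideanSpace ℝ (Fin q)) (hμ : μ = ∫ ω, W ω ∂P)
    (η : ℝ) (hη : 0 < η)
    (hsep : ∀ u : EuclideanSpace ℝ (Fin q), ‖u‖ = 1 → η ≤ ∫ ω, |⟪u, W ω - μ⟫| ∂P) :
    (∃ c > 0, ∀ (a : EuclideanSpace ℝ (Fin q)) (b : ℝ),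
        c * (‖a‖ + |b|) ≤ ∫ ω, |⟪a, W ω⟫ + b| ∂P) ∧
    (μ = 0 → ∀ (a : EuclideanSpace ℝ (Fin q)) (b : ℝ),
        (1 / 2) * min (η / 2) 1 * (‖a‖ + |b|) ≤ ∫ ω, |⟪a, W ω⟫ + b| ∂P) ∧
    (μ ≠ 0 → ∀ (a : EuclideanSpace ℝ (Fin q)) (b : ℝ),
        (1 / 2) * min (1 / 2) (η / (4 * ‖μ‖)) * min 1 (2 * ‖μ‖) * (‖a‖ + |b|)
          ≤ ∫ ω, |⟪a, W ω⟫ + b| ∂P) := by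
  have hzero : μ = 0 → ∀ (a : EuclideanSpace ℝ (Fin q)) (b : ℝ),
      (1 / 2) * min (η / 2) 1 * (‖a‖ + |b|) ≤ ∫ ω, |⟪a, W ω⟫ + b| ∂P := by
    intro h0 a b
    obtain ⟨h1, h2⟩ := key_ineqs W hWint μ hμ η hsep a b
    rw [h0, inner_zero_right, zero_add] at h1
    exact arith0 η ‖a‖ |b| _ hη (norm_nonneg a) (abs_nonneg b) h1 h2
  have hne : μ ≠ 0 → ∀ (a : EuclideanSpace ℝ (Fin q)) (b : ℝ),
      (1 / 2) * min (1 / 2) (η / (4 * ‖μ‖)) * min 1 (2 * ‖μ‖) * (‖a‖ + |b|)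
        ≤ ∫ ω, |⟪a, W ω⟫ + b| ∂P := by
    intro h0 a b
    obtain ⟨h1, h2⟩ := key_ineqs W hWint μ hμ η hsep a b
    have hm : 0 < ‖μ‖ := norm_pos_iff.mpr h0
    have h3 : |b| ≤ |⟪a, μ⟫ + b| + ‖μ‖ * ‖a‖ := by
      have h : |(⟪a, μ⟫ + b) - ⟪a, μ⟫| ≤ |⟪a, μ⟫ + b| + |⟪a, μ⟫| := abs_sub _ _
      rw [add_sub_cancel_left] at h
      have hcs : |⟪a, μ⟫| ≤ ‖a‖ * ‖μ‖ := abs_real_inner_le_norm a μ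
      nlinarith
    exact arith1 η ‖μ‖ ‖a‖ |b| _ _ hη hm (norm_nonneg a) (abs_nonneg b)
      (abs_nonneg _) h1 h2 h3
  refine ⟨?_, hzero, hne⟩
  rcases eq_or_ne μ 0 with h0 | h0
  · exact ⟨(1 / 2) * min (η / 2) 1,
      by positivity, hzero h0⟩
  · have hm : 0 < ‖μ‖ := norm_pos_iff.mpr h0
    exact ⟨(1 / 2) * min (1 / 2) (η / (4 * ‖μ‖)) * min 1 (2 * ‖μ‖),
      by positivity, hne h0⟩
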